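/- Let A be a finite set of size n ≥ 2 and r, s : A → Fin n bijections. With SRCC defined as 1 − 6·Σ (r(a) − s(a))² / (n(n²−1)), we have −1 ≤ SRCC(r, s) ≤ 1, and SRCC(r, s) = −1 if and only if s(a) = n − 1 − r(a) for all a ∈ A. -/

import Mathlib

lemma sum_range_sq_six (n : ℕ) :
    (∑ i ∈ Finset.range n, (i : ℤ) ^ 2) * 6 = n * (n - 1) * (2 * n - 1) := by
  induction n with
  | zero => simp
  | succ k ih =>
    rw [Finset.sum_range_succ, add_mul, ih]
    push_cast
    ring

lemma sum_range_id_two (n : ℕ) :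
    (∑ i ∈ Finset.range n, (i : ℤ)) * 2 = n * (n - 1) := by
  induction n with
  | zero => simp
  | succ k ih =>
    rw [Finset.sum_range_succ, add_mul, ih]
    push_cast
    ring

theorem stmt_8 {A : Type*} [Fintype A] (n : ℕ) (hn : 2 ≤ n)
    (hcard : Fintype.card A = n)
    (r s : A → Fin n) (hr : Function.Bijective r) (hs : Function.Bijective s) :
    (-1 ≤ 1 - 6 * ((∑ a : A, ((r a : ℤ) - (s a : ℤ)) ^ 2 : ℤ) : ℝ) /
        ((n : ℝ) * ((n : ℝ) ^ 2 - 1))) ∧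
    (1 - 6 * ((∑ a : A, ((r a : ℤ) - (s a : ℤ)) ^ 2 : ℤ) : ℝ) /
        ((n : ℝ) * ((n : ℝ) ^ 2 - 1)) ≤ 1) ∧
    ((1 - 6 * ((∑ a : A, ((r a : ℤ) - (s a : ℤ)) ^ 2 : ℤ) : ℝ) /
        ((n : ℝ) * ((n : ℝ) ^ 2 - 1)) = -1) ↔
      ∀ a : A, (s a : ℤ) = (n : ℤ) - 1 - (r a : ℤ)) := by
  set S : ℤ := ∑ a : A, ((r a : ℤ) - (s a : ℤ)) ^ 2 with hS
  set G : ℤ := ∑ a : A, ((r a : ℤ) + (s a : ℤ) - ((n : ℤ) - 1)) ^ 2 with hG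
  -- sums over bijections
  have hr1 : ∑ a : A, ((r a : ℤ)) = ∑ i ∈ Finset.range n, (i : ℤ) := by
    rw [← Fin.sum_univ_eq_sum_range]
    exact hr.sum_comp (fun i : Fin n => (i : ℤ))
  have hs1 : ∑ a : A, ((s a : ℤ)) = ∑ i ∈ Finset.range n, (i : ℤ) := by
    rw [← Fin.sum_univ_eq_sum_range]
    exact hs.sum_comp (fun i : Fin n => (i : ℤ))
  have hr2 : ∑ a : A, ((r a : ℤ)) ^ 2 = ∑ i ∈ Finset.range n, (i : ℤ) ^ 2 := by
    rw [← Fin.sum_univ_eq_sum_range]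
    exact hr.sum_comp (fun i : Fin n => (i : ℤ) ^ 2)
  have hs2 : ∑ a : A, ((s a : ℤ)) ^ 2 = ∑ i ∈ Finset.range n, (i : ℤ) ^ 2 := by
    rw [← Fin.sum_univ_eq_sum_range]
    exact hs.sum_comp (fun i : Fin n => (i : ℤ) ^ 2)
  have key : 3 * S + 3 * G = (n : ℤ) * ((n : ℤ) ^ 2 - 1) := by
    have e1 : 3 * S + 3 * G = ∑ a : A, (6 * (r a : ℤ) ^ 2 + 6 * (s a : ℤ) ^ 2
        - 6 * ((n : ℤ) - 1) * (r a : ℤ) - 6 * ((n : ℤ) - 1) * (s a : ℤ)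
        + 3 * ((n : ℤ) - 1) ^ 2) := by
      rw [hS, hG, Finset.mul_sum, Finset.mul_sum, ← Finset.sum_add_distrib]
      exact Finset.sum_congr rfl fun a _ => by ring
    rw [e1]
    simp only [Finset.sum_add_distrib, Finset.sum_sub_distrib, ← Finset.mul_sum,
      Finset.sum_const, nsmul_eq_mul, Finset.card_univ, hcard]
    rw [hr1, hs1, hr2, hs2]
    linear_combination 2 * sum_range_sq_six n - 6 * ((n : ℤ) - 1) * sum_range_id_two n
  have hG0 : 0 ≤ G := Finset.sum_nonneg fun a _ => sq_nonneg _
  have hS0 : 0 ≤ S := Finset.sum_nonneg fun a _ => sq_nonneg _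
  have hD : (0 : ℝ) < (n : ℝ) * ((n : ℝ) ^ 2 - 1) := by
    have : (2 : ℝ) ≤ (n : ℝ) := by exact_mod_cast hn
    nlinarith
  have hSle : 3 * S ≤ (n : ℤ) * ((n : ℤ) ^ 2 - 1) := by linarith
  refine ⟨?_, ?_, ?_⟩
  · have hdle : 6 * (S : ℝ) / ((n : ℝ) * ((n : ℝ) ^ 2 - 1)) ≤ 2 := by
      rw [div_le_iff₀ hD]
      have : (3 : ℝ) * (S : ℝ) ≤ (n : ℝ) * ((n : ℝ) ^ 2 - 1) := by
        exact_mod_cast hSle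
      linarith
    linarith
  · have h1 : 0 ≤ 6 * ((S : ℝ)) / ((n : ℝ) * ((n : ℝ) ^ 2 - 1)) := by
      apply div_nonneg _ hD.le
      have : (0:ℝ) ≤ (S:ℝ) := by exact_mod_cast hS0
      linarith
    linarith
  · constructor
    · intro h
      have heq : 6 * (S : ℝ) = 2 * ((n : ℝ) * ((n : ℝ) ^ 2 - 1)) := by
        have h2 : 6 * (S : ℝ) / ((n : ℝ) * ((n : ℝ) ^ 2 - 1)) = 2 := by linarith
        rw [div_eq_iff hD.ne'] at h2
        linarith
      have heqZ : 6 * S = 2 * ((n : ℤ) * ((n : ℤ) ^ 2 - 1)) := by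
        exact_mod_cast heq
      have hGz : G = 0 := by linarith
      have hall := (Finset.sum_eq_zero_iff_of_nonneg
        (fun a _ => sq_nonneg ((r a : ℤ) + (s a : ℤ) - ((n : ℤ) - 1)))).mp hGz
      intro a
      have := hall a (Finset.mem_univ a)
      have h0 : (r a : ℤ) + (s a : ℤ) - ((n : ℤ) - 1) = 0 := by
        exact pow_eq_zero_iff (by norm_num) |>.mp this
      linarith
    · intro h
      have hGz : G = 0 := by
        apply Finset.sum_eq_zero
        intro a _
        have := h a
        have : (r a : ℤ) + (s a : ℤ) - ((n : ℤ) - 1) = 0 := by linarith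
        rw [this]; ring
      have hSeq : 3 * S = (n : ℤ) * ((n : ℤ) ^ 2 - 1) := by linarith
      have hSR : 3 * (S : ℝ) = (n : ℝ) * ((n : ℝ) ^ 2 - 1) := by exact_mod_cast hSeq
      have h2 : 6 * (S : ℝ) / ((n : ℝ) * ((n : ℝ) ^ 2 - 1)) = 2 := by
        rw [div_eq_iff hD.ne']
        linarith
      linarith
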